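/- In the SETAF S_D built from conflicts each of size ≥ 2, every naive extension is admissible, hence preferred: naive, preferred and stable extensions of S_D coincide. -/

import Mathlib

def SetafConflictFree {A : Type} (R : Set A → A → Prop) (P : Set A) : Prop :=
  ¬ ∃ S a, R S a ∧ S ⊆ P ∧ a ∈ P

def SetafDefends {A : Type} (R : Set A → A → Prop) (P : Set A) (a : A) : Prop :=
  ∀ S, R S a → ∃ S' ⊆ P, ∃ b ∈ S, R S' b

def SetafAdmissible {A : Type} (R : Set A → A → Prop) (P : Set A) : Prop :=
  SetafConflictFree R P ∧ ∀ a ∈ P, SetafDefends R P a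

def SetafNaive {A : Type} (R : Set A → A → Prop) (P : Set A) : Prop :=
  SetafConflictFree R P ∧ ∀ P', SetafConflictFree R P' → P ⊆ P' → P' = P

def SetafPreferred {A : Type} (R : Set A → A → Prop) (P : Set A) : Prop :=
  SetafAdmissible R P ∧ ∀ P', SetafAdmissible R P' → P ⊆ P' → P' = P

def SetafStable {A : Type} (R : Set A → A → Prop) (P : Set A) : Prop :=
  SetafConflictFree R P ∧ ∀ a ∉ P, ∃ S ⊆ P, R S a

def AttD {T : Type} (conflicts : Set (Set T)) (S : Set T) (t : T) : Prop :=
  ∃ E ∈ conflicts, t ∈ E ∧ S = E \ {t}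


lemma cf_iff {T : Type} (conflicts : Set (Set T))
    (hsize : ∀ E ∈ conflicts, E.Nontrivial) (P : Set T) :
    SetafConflictFree (AttD conflicts) P ↔ ∀ E ∈ conflicts, ¬ E ⊆ P := by
  constructor
  · intro hcf E hE hEP
    obtain ⟨t, ht, _⟩ := hsize E hE
    exact hcf ⟨E \ {t}, t, ⟨E, hE, ht, rfl⟩, fun x hx => hEP hx.1, hEP ht⟩
  · rintro h ⟨S, a, ⟨E, hE, haE, rfl⟩, hSP, haP⟩
    exact h E hE (fun x hx => by
      by_cases hxa : x = a
      · exact hxa ▸ haP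
      · exact hSP ⟨hx, hxa⟩)

lemma naive_stable {T : Type} (conflicts : Set (Set T))
    (P : Set T) (h : SetafNaive (AttD conflicts) P) :
    SetafStable (AttD conflicts) P := by
  obtain ⟨hcf, hmax⟩ := h
  refine ⟨hcf, fun a ha => ?_⟩
  have hne : ¬ SetafConflictFree (AttD conflicts) (insert a P) := by
    intro hcf'
    exact ha ((hmax _ hcf' (Set.subset_insert a P)) ▸ Set.mem_insert a P)
  rw [SetafConflictFree] at hne
  push_neg at hne
  obtain ⟨S, b, hR, hSP, hbP⟩ := hne
  obtain ⟨E, hE, hbE, rfl⟩ := hR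
  have hEins : E ⊆ insert a P := fun x hx => by
    by_cases hxb : x = b
    · exact hxb ▸ hbP
    · exact hSP ⟨hx, hxb⟩
  have haE : a ∈ E := by
    by_contra haE
    have hEP : E ⊆ P := fun x hx => (hEins hx).resolve_left (fun h => haE (h ▸ hx))
    exact absurd ⟨E \ {b}, b, ⟨E, hE, hbE, rfl⟩, fun x hx => hEP hx.1, hEP hbE⟩ hcf
  refine ⟨E \ {a}, fun x hx => ?_, E, hE, haE, rfl⟩
  exact (hEins hx.1).resolve_left hx.2

lemma stable_adm {T : Type} (conflicts : Set (Set T))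
    (hsize : ∀ E ∈ conflicts, E.Nontrivial)
    (P : Set T) (h : SetafStable (AttD conflicts) P) :
    SetafAdmissible (AttD conflicts) P := by
  obtain ⟨hcf, hst⟩ := h
  refine ⟨hcf, fun a haP S hS => ?_⟩
  obtain ⟨E, hE, haE, rfl⟩ := hS
  have : ∃ b ∈ E \ {a}, b ∉ P := by
    by_contra hb
    push_neg at hb
    have hEP : E ⊆ P := fun x hx => by
      by_cases hxa : x = a
      · exact hxa ▸ haP
      · exact hb x ⟨hx, hxa⟩
    exact (cf_iff conflicts hsize P).mp hcf E hE hEP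
  obtain ⟨b, hbS, hbP⟩ := this
  obtain ⟨S', hS'P, hS'b⟩ := hst b hbP
  exact ⟨S', hS'P, b, hbS, hS'b⟩

lemma stable_naive {T : Type} (conflicts : Set (Set T))
    (P : Set T) (h : SetafStable (AttD conflicts) P) :
    SetafNaive (AttD conflicts) P := by
  obtain ⟨hcf, hst⟩ := h
  refine ⟨hcf, fun P' hcf' hPP' => ?_⟩
  by_contra hne
  obtain ⟨a, haP', haP⟩ : ∃ a ∈ P', a ∉ P := by
    by_contra hx; push_neg at hx
    exact hne (Set.Subset.antisymm hx hPP')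
  obtain ⟨S, hSP, hR⟩ := hst a haP
  exact hcf' ⟨S, a, hR, hSP.trans hPP', haP'⟩

/-- In the SETAF generated by conflicts of size at least two, every naive
extension is admissible, and naive, preferred and stable extensions coincide. -/
theorem stmt6 {T : Type} [Fintype T] (conflicts : Set (Set T))
    (hsize : ∀ E ∈ conflicts, E.Nontrivial)
    (hanti : ∀ E ∈ conflicts, ∀ E' ∈ conflicts, E ⊆ E' → E = E')
    (P : Set T) :
    (SetafNaive (AttD conflicts) P → SetafAdmissible (AttD conflicts) P) ∧
    (SetafNaive (AttD conflicts) P ↔ SetafPreferred (AttD conflicts) P) ∧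
    (SetafNaive (AttD conflicts) P ↔ SetafStable (AttD conflicts) P) := by
  have hNS : SetafNaive (AttD conflicts) P → SetafStable (AttD conflicts) P :=
    naive_stable conflicts P
  have hSA := stable_adm conflicts hsize P
  have hSN := stable_naive conflicts P
  refine ⟨fun h => hSA (hNS h), ⟨fun h => ?_, fun h => ?_⟩, ⟨hNS, hSN⟩⟩
  · refine ⟨hSA (hNS h), fun P' hadm hPP' => h.2 P' hadm.1 hPP'⟩
  · -- preferred → naive
    obtain ⟨⟨hcf, _⟩, hmax⟩ := h
    refine ⟨hcf, fun P' hcf' hPP' => ?_⟩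
    -- extend P' to a maximal conflict-free set
    classical
    have hfin : {Q : Set T | SetafConflictFree (AttD conflicts) Q ∧ P' ⊆ Q}.Finite :=
      Set.toFinite _
    have hne : {Q : Set T | SetafConflictFree (AttD conflicts) Q ∧ P' ⊆ Q}.Nonempty :=
      ⟨P', hcf', subset_rfl⟩
    obtain ⟨Q, hQ, hQmax⟩ : ∃ Q ∈ {Q : Set T | SetafConflictFree (AttD conflicts) Q ∧ P' ⊆ Q},
        ∀ Q' ∈ {Q : Set T | SetafConflictFree (AttD conflicts) Q ∧ P' ⊆ Q}, id Q ≤ id Q' → id Q = id Q' := by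
      obtain ⟨Q, hQ, hQmax⟩ := hfin.exists_maximalFor id _ hne
      exact ⟨Q, hQ, fun Q' hQ' h => le_antisymm h (hQmax hQ' h)⟩
    have hQnaive : SetafNaive (AttD conflicts) Q := by
      refine ⟨hQ.1, fun Q' hcfQ' hQQ' => ?_⟩
      exact (hQmax Q' ⟨hcfQ', hQ.2.trans hQQ'⟩ hQQ').symm
    have hQadm := stable_adm conflicts hsize Q (naive_stable conflicts Q hQnaive)
    have hQP : Q = P := hmax Q hQadm (hPP'.trans hQ.2)
    exact Set.Subset.antisymm (hQP ▸ hQ.2) hPP'
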